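/- Let G be an inverse semigroup, H' ⊆ G a finite sub-inverse semigroup, and A a G-algebra. For all g, h, k ∈ G_H and all a ∈ A_{g g*}, b ∈ A_{h h*}, c ∈ A_{k k*}, the following identity holds in 𝔽(G,A): [h* k ∈ H] · a·α_g(α_{h*}(b*·c)) · (g h* k) = [g h* k ∈ G_H]·[g ≡ g h* k] · a·α_{g h*}(b*)·α_{g h*}(c) · (g h* k), where [P] is the scalar 1 if P holds and 0 otherwise. (This is the identity x·⟨y,z⟩_{B₀} = ⟨x,y⟩_{E₀}·z on standard elements x = a⋊g, y = b⋊h, z = c⋊k.) -/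

import Mathlib

/-! Common setup: inverse semigroups, G-algebras, and the universal *-algebra 𝔽(G,A). -/

noncomputable section

/-- An inverse semigroup: a semigroup in which every element `g` has a unique
generalized inverse, denoted `star g`. -/
class InverseSemigroup (G : Type*) extends Semigroup G, Star G where
  mul_star_mul_self : ∀ g : G, g * star g * g = g
  star_mul_self_mul_star : ∀ g : G, star g * g * star g = star g
  star_unique : ∀ g h : G, g * h * g = g → h * g * h = h → h = star g

namespace Green

/-! ### The free complex *-algebra on a set of generators

The free complex *-algebra on a set `Y` is realized as the monoid algebra of the free
monoid on the letters `Y × Bool` (a generator together with a formal star flag); its star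
operation conjugates coefficients, reverses words and flips the star flags. -/

/-- The free complex *-algebra on the set `Y`. -/
abbrev FreeStar (Y : Type*) := MonoidAlgebra ℂ (FreeMonoid (Y × Bool))

namespace FreeStar

variable {Y : Type*}

/-- Star of a word: reverse it and flip all star flags. -/
def wordStar (w : FreeMonoid (Y × Bool)) : FreeMonoid (Y × Bool) :=
  FreeMonoid.ofList (((FreeMonoid.toList w).map fun x => (x.1, !x.2)).reverse)

lemma wordStar_mul (v w : FreeMonoid (Y × Bool)) :
    wordStar (v * w) = wordStar w * wordStar v := by
  simp [wordStar, FreeMonoid.toList_mul]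

lemma wordStar_wordStar (w : FreeMonoid (Y × Bool)) : wordStar (wordStar w) = w := by
  simp [wordStar, List.map_reverse, List.map_map, Function.comp_def]

/-- The star operation on the free complex *-algebra, as an additive map. -/
def starAux : FreeStar Y →+ FreeStar Y :=
  MonoidAlgebra.coeffAddEquiv.symm.toAddMonoidHom.comp (((Finsupp.mapDomain.addMonoidHom wordStar).comp
    (Finsupp.mapRange.addMonoidHom (starRingEnd ℂ).toAddMonoidHom)).comp
      MonoidAlgebra.coeffAddEquiv.toAddMonoidHom)

lemma starAux_apply (f : FreeStar Y) :
    starAux f = MonoidAlgebra.ofCoeff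
      (Finsupp.mapDomain wordStar (Finsupp.mapRange (starRingEnd ℂ) (map_zero _) f.coeff)) :=
  rfl

lemma starAux_single (w : FreeMonoid (Y × Bool)) (c : ℂ) :
    starAux (MonoidAlgebra.single w c) = MonoidAlgebra.single (wordStar w) (starRingEnd ℂ c) := by
  rw [starAux_apply]
  simp only [MonoidAlgebra.coeff_single, Finsupp.mapRange_single, Finsupp.mapDomain_single,
    MonoidAlgebra.ofCoeff_single]

instance instStarRing : StarRing (FreeStar Y) where
  star := starAux
  star_involutive := by
    intro f
    induction f using MonoidAlgebra.induction_linear with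
    | zero => simp
    | add f g hf hg => simp_all [map_add]
    | single w c => simp [starAux_single, wordStar_wordStar, starRingEnd_self_apply]
  star_mul := by
    intro f g
    show starAux (f * g) = starAux g * starAux f
    induction f using MonoidAlgebra.induction_linear with
    | zero => simp
    | add f f' hf hf' => simp [mul_add, add_mul, map_add, hf, hf']
    | single w c =>
      induction g using MonoidAlgebra.induction_linear with
      | zero => simp
      | add g g' hg hg' => simp [mul_add, add_mul, map_add, hg, hg']
      | single v d =>
        simp only [MonoidAlgebra.single_mul_single, starAux_single, wordStar_mul, map_mul]
        rw [mul_comm]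
  star_add := map_add _

end FreeStar

section GAlgebra

variable {G : Type*} [InverseSemigroup G]
variable {A : Type*} [NonUnitalNormedRing A] [StarRing A] [CStarRing A] [NormedSpace ℂ A]
  [IsScalarTower ℂ A A] [SMulCommClass ℂ A A] [StarModule ℂ A] [CompleteSpace A]

/-- `α` is an action of the inverse semigroup `G` on the C*-algebra `A` making it a
`G`-algebra: a semigroup homomorphism `G → End(A)` into the *-endomorphisms of `A` such
that `g g*(a)·b = a·g g*(b)` for all `a b : A` and `g : G`. -/
structure IsGAlgebra (α : G → A →⋆ₙₐ[ℂ] A) : Prop where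
  map_mul : ∀ g h : G, α (g * h) = (α g).comp (α h)
  central : ∀ (g : G) (a b : A), α (g * star g) a * b = a * α (g * star g) b

variable (α : G → A →⋆ₙₐ[ℂ] A)

/-- The generator of the free *-algebra corresponding to `a ∈ A`. -/
def genA (a : A) : FreeStar (A ⊕ G) := MonoidAlgebra.single (FreeMonoid.of (Sum.inl a, false)) 1

/-- The generator of the free *-algebra corresponding to `g ∈ G`. -/
def genG (g : G) : FreeStar (A ⊕ G) := MonoidAlgebra.single (FreeMonoid.of (Sum.inr g, false)) 1

/-- The defining relations of `𝔽(G,A)`: the *-algebra relations of `A` are respected, the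
multiplication and involution of `G` are respected, and `g(a)·g g* = g·a·g*`,
`[g g*, a] = 0` hold; the relation is moreover closed under `star`, so that the ideal
generated by it is a two-sided *-ideal. -/
inductive Rel : FreeStar (A ⊕ G) → FreeStar (A ⊕ G) → Prop
  | add_A (a b : A) : Rel (genA (G := G) (a + b)) (genA a + genA b)
  | smul_A (c : ℂ) (a : A) : Rel (genA (G := G) (c • a)) (c • genA a)
  | mul_A (a b : A) : Rel (genA (G := G) (a * b)) (genA a * genA b)
  | star_A (a : A) : Rel (genA (G := G) (star a)) (star (genA a))
  | mul_G (g h : G) : Rel (genG (A := A) (g * h)) (genG g * genG h)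
  | star_G (g : G) : Rel (genG (A := A) (star g)) (star (genG g))
  | act (g : G) (a : A) :
      Rel (genA (α g a) * genG g * genG (star g)) (genG g * genA a * genG (star g))
  | comm (g : G) (a : A) :
      Rel (genG g * genG (star g) * genA a) (genA a * genG g * genG (star g))
  | star_cl {x y} : Rel x y → Rel (star x) (star y)

/-- The universal *-algebra `𝔽(G,A)`: the quotient of the free complex *-algebra on the
set `A ⊔ G` by the two-sided *-ideal generated by the defining relations. -/
abbrev F := RingQuot (Rel α)

instance : StarRing (F α) := RingQuot.starRing _ (fun _ _ h => Rel.star_cl h)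

/-- The canonical copy of `a ∈ A` inside `𝔽(G,A)`. -/
def ιA (a : A) : F α := RingQuot.mkAlgHom ℂ (Rel α) (genA a)

/-- The canonical copy of `g ∈ G` inside `𝔽(G,A)`. -/
def ιG (g : G) : F α := RingQuot.mkAlgHom ℂ (Rel α) (genG g)

/-- The element `e₀(1-e₁)⋯(1-eₙ)` of `𝔽(G,A)` (product expanded multiplicatively),
given `e₀` and the list `[e₁, …, eₙ]`. -/
def elemP (e₀ : G) (l : List G) : F α :=
  l.foldl (fun p e => p - p * ιG α e) (ιG α e₀)

/-- The element `g·e₀(1-e₁)⋯(1-eₙ)` of `𝔽(G,A)`. -/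
def elemGE (g e₀ : G) (l : List G) : F α := ιG α g * elemP α e₀ l

/-- The set `E(G)` of projections `e₀(1-e₁)⋯(1-eₙ)` in `𝔽(G,A)`, with `e₀, …, eₙ`
idempotents of `G`. -/
def EG : Set (F α) :=
  {x | ∃ (e₀ : G) (l : List G), e₀ * e₀ = e₀ ∧ (∀ e ∈ l, e * e = e) ∧ x = elemP α e₀ l}

/-- The inverse semigroup `G_E = {g·p | g ∈ G, p ∈ E(G)}` inside `𝔽(G,A)`. -/
def GE : Set (F α) :=
  {x | ∃ (g e₀ : G) (l : List G),
    e₀ * e₀ = e₀ ∧ (∀ e ∈ l, e * e = e) ∧ x = elemGE α g e₀ l}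

/-- The extension of the `G`-action along a list: `(id - α e₁)∘⋯∘(id - α eₙ)`. -/
def actL : List G → A → A
  | [] => id
  | e :: l => fun a => actL l a - α e (actL l a)

/-- The extension of the `G`-action to `E(G)`:
`α_{e₀(1-e₁)⋯(1-eₙ)} = α_{e₀}∘(id - α_{e₁})∘⋯∘(id - α_{eₙ})`. -/
def actP (e₀ : G) (l : List G) : A → A := fun a => α e₀ (actL α l a)

/-- The extension of the `G`-action to `G_E`: `α_{g·p} = α_g ∘ α_p`. -/
def actGE (g e₀ : G) (l : List G) : A → A := fun a => α g (actP α e₀ l a)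

/-- The action of `k* = (g·e₀(1-e₁)⋯(1-eₙ))* = g*·(g e₀ g*)(1 - g e₁ g*)⋯(1 - g eₙ g*)`,
for `k = g·e₀(1-e₁)⋯(1-eₙ) ∈ G_E`. -/
def actStar (g e₀ : G) (l : List G) : A → A :=
  fun a => α (star g) (actP α (g * e₀ * star g) (l.map fun e => g * e * star g) a)

/-- The subalgebra `A_{k k*} = α_{k k*}(A) = (α_k ∘ α_{k*})(A)`,
for `k = g·e₀(1-e₁)⋯(1-eₙ) ∈ G_E`. -/
def carrier (g e₀ : G) (l : List G) : Set A :=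
  Set.range fun a => actGE α g e₀ l (actStar α g e₀ l a)

/-- `S` is a sub-inverse semigroup of `G`: a subset closed under multiplication and
involution. -/
structure IsSubInvSemigroup (S : Set G) : Prop where
  mul_mem : ∀ {a b : G}, a ∈ S → b ∈ S → a * b ∈ S
  star_mem : ∀ {a : G}, a ∈ S → star a ∈ S

variable (S : Set G)

/-- The set `E(H')` of projections `e₀(1-e₁)⋯(1-eₙ)` with `e₀, …, eₙ` idempotents of
`H' = S`. -/
def EH : Set (F α) :=
  {x | ∃ (e₀ : G) (l : List G), (e₀ ∈ S ∧ e₀ * e₀ = e₀) ∧ (∀ e ∈ l, e ∈ S ∧ e * e = e) ∧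
    x = elemP α e₀ l}

/-- `H⁽⁰⁾`: the set of nonzero minimal projections of `E(H')`
(where `q ≤ p` means `q p = q`). -/
def H0 : Set (F α) :=
  {p | p ∈ EH α S ∧ p ≠ 0 ∧ ∀ q ∈ EH α S, q ≠ 0 → q * p = q → q = p}

/-- The groupoid `H = {t·e | t ∈ H', e ∈ H⁽⁰⁾} \ {0}` associated to `H'`. -/
def Hgpd : Set (F α) :=
  {x | x ≠ 0 ∧ ∃ t ∈ S, ∃ e ∈ H0 α S, x = ιG α t * e}

/-- `G_H = {g·e | g ∈ G, e ∈ H⁽⁰⁾, g* g ≥ e} \ {0}`. -/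
def GH : Set (F α) :=
  {x | x ≠ 0 ∧ ∃ (g : G), ∃ e ∈ H0 α S, x = ιG α g * e ∧ e * ιG α (star g * g) = e}

/-- The relation `≡` on `G_H`: `g ≡ h` iff `g t = h` for some `t ∈ H`. -/
def equivH (x y : F α) : Prop := ∃ t ∈ Hgpd α S, x * t = y

end GAlgebra

/-- For an assertion `P`, the scalar `[P]` which is `1` if `P` is true and `0` if `P`
is false. -/
def ind (P : Prop) : ℂ := @ite _ P (Classical.propDecidable P) 1 0

end Green


set_option linter.unusedSectionVars false
set_option linter.unusedVariables false

namespace Green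

section ISG
variable {G : Type*} [InverseSemigroup G]
open InverseSemigroup

lemma starG_starG (g : G) : star (star g) = g :=
  (star_unique (star g) g (star_mul_self_mul_star g) (mul_star_mul_self g)).symm

lemma idem_starG {e : G} (he : e * e = e) : star e = e :=
  (star_unique e e (by rw [he, he]) (by rw [he, he])).symm

lemma mul_star_self' (g : G) : g * (star g * g) = g := by
  rw [← mul_assoc, mul_star_mul_self]

lemma mul_star_self'' (g x : G) : g * (star g * (g * x)) = g * x := by
  rw [← mul_assoc, ← mul_assoc, mul_star_mul_self]

lemma star_mul_self' (g : G) : star g * (g * star g) = star g := by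
  rw [← mul_assoc, star_mul_self_mul_star]

lemma star_mul_self'' (g x : G) : star g * (g * (star g * x)) = star g * x := by
  rw [← mul_assoc, ← mul_assoc, star_mul_self_mul_star]

lemma idem_ss (g : G) : (star g * g) * (star g * g) = star g * g := by
  simp only [mul_assoc]; exact star_mul_self'' g g

lemma idem_gs (g : G) : (g * star g) * (g * star g) = g * star g := by
  simp only [mul_assoc]; exact mul_star_self'' g (star g)

lemma idem_mul_idem {e f : G} (he : e * e = e) (hf : f * f = f) :
    (e * f) * (e * f) = e * f := by
  have he1 : ∀ x : G, e * (e * x) = e * x := fun x => by rw [← mul_assoc, he]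
  have hf1 : ∀ x : G, f * (f * x) = f * x := fun x => by rw [← mul_assoc, hf]
  have key1 : e * (f * (star (e * f) * (e * f))) = e * f := by
    simpa only [mul_assoc] using mul_star_mul_self (e * f)
  have key2 : ∀ x : G, star (e*f) * (e * (f * (star (e*f) * x))) = star (e*f) * x := fun x => by
    have := congrArg (· * x) (star_mul_self_mul_star (e * f))
    simpa only [mul_assoc] using this
  have gA : (e*f) * (f * (star (e*f) * e)) * (e*f) = e*f := by
    simp only [mul_assoc, he1, hf1]; exact key1
  have gB : (f * (star (e*f) * e)) * (e*f) * (f * (star (e*f) * e)) = f * (star (e*f) * e) := by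
    simp only [mul_assoc, he1, hf1]; rw [key2]
  have hbsa : f * (star (e*f) * e) = star (e*f) := star_unique (e*f) _ gA gB
  have hss : star (e*f) * star (e*f) = star (e*f) := by
    rw [← hbsa]; simp only [mul_assoc]; rw [key2]
  have h2 : star (star (e*f)) = e * f := starG_starG (e*f)
  have hefs : e * f = star (e*f) := by
    conv_lhs => rw [← h2]
    exact idem_starG hss
  rw [hefs]; exact hss

lemma idem_comm {e f : G} (he : e * e = e) (hf : f * f = f) : e * f = f * e := by
  have he1 : ∀ x : G, e * (e * x) = e * x := fun x => by rw [← mul_assoc, he]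
  have hf1 : ∀ x : G, f * (f * x) = f * x := fun x => by rw [← mul_assoc, hf]
  have hef := idem_mul_idem he hf
  have hfe := idem_mul_idem hf he
  have h1 : (e*f) * (f*e) * (e*f) = e*f := by
    simp only [mul_assoc, he1, hf1]
    simpa only [mul_assoc] using hef
  have h2 : (f*e) * (e*f) * (f*e) = f*e := by
    simp only [mul_assoc, he1, hf1]
    simpa only [mul_assoc] using hfe
  have h3 : f*e = star (e*f) := star_unique (e*f) (f*e) h1 h2
  have h4 : star (e*f) = e*f := idem_starG hef
  rw [h3, h4]

lemma idem_conj {e : G} (g : G) (he : e * e = e) :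
    (g * e * star g) * (g * e * star g) = g * e * star g := by
  have hc : e * (star g * g) = (star g * g) * e := idem_comm he (idem_ss g)
  have step : star g * (g * (e * star g)) = e * star g := by
    rw [← mul_assoc, ← mul_assoc, ← hc]
    simp only [mul_assoc]
    rw [star_mul_self']
  have he1 : ∀ x : G, e * (e * x) = e * x := fun x => by rw [← mul_assoc, he]
  simp only [mul_assoc]
  rw [step, he1]

lemma idem_conj' {e : G} (g : G) (he : e * e = e) :
    (star g * e * g) * (star g * e * g) = star g * e * g := by
  have := idem_conj (star g) he
  rwa [starG_starG] at this

lemma starG_mul (g h : G) : star (g * h) = star h * star g := by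
  have hcomm : (h * star h) * (star g * g) = (star g * g) * (h * star h) :=
    idem_comm (idem_gs h) (idem_ss g)
  have mid : ∀ x : G, h * (star h * (star g * (g * x))) = star g * (g * (h * (star h * x))) :=
    fun x => by
      have := congrArg (· * x) hcomm
      simpa only [mul_assoc] using this
  have A : (g*h) * (star h * star g) * (g*h) = g*h := by
    simp only [mul_assoc]
    rw [mid h, mul_star_self'', mul_star_self']
  have B : (star h * star g) * (g*h) * (star h * star g) = star h * star g := by
    simp only [mul_assoc]
    rw [← mid (star g), star_mul_self' g, star_mul_self'']
  exact (star_unique (g*h) (star h * star g) A B).symm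

lemma idem_swap_helper {e : G} (g : G) (he : e * e = e) :
    ∀ x : G, g * (star g * (e * x)) = e * (g * (star g * x)) := fun x => by
  have hc : (g * star g) * e = e * (g * star g) := (idem_comm he (idem_gs g)).symm
  have := congrArg (· * x) hc
  simpa only [mul_assoc] using this

lemma idem_mul_g {e : G} (g : G) (he : e * e = e) : e * g = g * (star g * e * g) := by
  simp only [mul_assoc]
  rw [idem_swap_helper g he g, mul_star_self']

lemma lem_g11 {e : G} (t : G) (he : e * e = e) :
    (star t * t) * (star t * e * t) = star t * e * t := by
  simp only [mul_assoc]
  rw [idem_swap_helper t he t, mul_star_self']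

lemma lem_g8 (g t : G) : t * (star t * ((star g * g) * t)) = (star g * g) * t := by
  rw [idem_swap_helper t (idem_ss g) t, mul_star_self']

lemma lem_g9 (g t : G) : star (g * t) * (g * t) = star t * ((star g * g) * t) := by
  rw [starG_mul]; simp only [mul_assoc]

end ISG

section FAlg
variable {G : Type*} [InverseSemigroup G]
variable {A : Type*} [NonUnitalNormedRing A] [StarRing A] [CStarRing A] [NormedSpace ℂ A]
  [IsScalarTower ℂ A A] [SMulCommClass ℂ A A] [StarModule ℂ A] [CompleteSpace A]
variable (α : G → A →⋆ₙₐ[ℂ] A)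

lemma mk_eq (x : FreeStar (A ⊕ G)) :
    RingQuot.mkAlgHom ℂ (Rel α) x = ⟨Quot.mk _ x⟩ := by
  rw [RingQuot.mkAlgHom_def]
  show RingQuot.mkRingHom (Rel α) x = _
  rw [RingQuot.mkRingHom_def]; rfl

lemma star_mk (x : FreeStar (A ⊕ G)) :
    star (RingQuot.mkAlgHom ℂ (Rel α) x) = RingQuot.mkAlgHom ℂ (Rel α) (star x) := by
  rw [mk_eq, mk_eq]
  rfl

lemma ιG_mul (g h : G) : ιG α g * ιG α h = ιG α (g * h) := by
  unfold ιG
  rw [RingQuot.mkAlgHom_rel ℂ (Rel.mul_G g h), map_mul]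

lemma ιG_star (g : G) : star (ιG α g) = ιG α (star g) := by
  unfold ιG
  rw [star_mk, RingQuot.mkAlgHom_rel ℂ (Rel.star_G g)]

/-- Auxiliary: the product `(1-e₁)⋯(1-eₙ)`. -/
def Qp (l : List G) : F α := (l.map fun e => 1 - ιG α e).prod

lemma Qp_nil : Qp α ([] : List G) = 1 := rfl

lemma Qp_cons (e : G) (l : List G) : Qp α (e :: l) = (1 - ιG α e) * Qp α l := by
  simp [Qp]

lemma Qp_append (l m : List G) : Qp α (l ++ m) = Qp α l * Qp α m := by
  simp [Qp]

lemma foldl_eq (v : F α) (l : List G) :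
    l.foldl (fun p e => p - p * ιG α e) v = v * Qp α l := by
  induction l generalizing v with
  | nil => simp [Qp_nil]
  | cons e l ih =>
    rw [List.foldl_cons, ih, Qp_cons, ← mul_assoc, mul_one_sub]

lemma elemP_eq (e₀ : G) (l : List G) : elemP α e₀ l = ιG α e₀ * Qp α l :=
  foldl_eq α _ l

lemma elemP_nil (e₀ : G) : elemP α e₀ [] = ιG α e₀ := by
  rw [elemP_eq, Qp_nil, mul_one]

lemma ι_comm_ι {e f : G} (he : e * e = e) (hf : f * f = f) :
    ιG α e * ιG α f = ιG α f * ιG α e := by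
  rw [ιG_mul, ιG_mul, idem_comm he hf]

lemma sub_comm_of_comm {x y : F α} (h : x * y = y * x) : (1 - x) * y = y * (1 - x) := by
  rw [one_sub_mul, mul_one_sub, h]

lemma one_sub_idem {x : F α} (h : x * x = x) : (1 - x) * (1 - x) = 1 - x := by
  rw [mul_one_sub, one_sub_mul, h, sub_self, sub_zero]

lemma Qp_comm_ι {f : G} (hf : f * f = f) {l : List G} (hl : ∀ e ∈ l, e * e = e) :
    ιG α f * Qp α l = Qp α l * ιG α f := by
  induction l with
  | nil => rw [Qp_nil, one_mul, mul_one]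
  | cons e l ih =>
    have he := hl e List.mem_cons_self
    have hl' : ∀ e ∈ l, e * e = e := fun e' h' => hl e' (List.mem_cons_of_mem _ h')
    have h1 : ιG α f * (1 - ιG α e) = (1 - ιG α e) * ιG α f :=
      (sub_comm_of_comm α (ι_comm_ι α he hf)).symm
    rw [Qp_cons, ← mul_assoc, h1, mul_assoc, ih hl', ← mul_assoc]

lemma Qp_comm_Qp {l m : List G} (hl : ∀ e ∈ l, e * e = e) (hm : ∀ e ∈ m, e * e = e) :
    Qp α l * Qp α m = Qp α m * Qp α l := by
  induction l with
  | nil => rw [Qp_nil, one_mul, mul_one]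
  | cons e l ih =>
    have he := hl e List.mem_cons_self
    have hl' : ∀ e ∈ l, e * e = e := fun e' h' => hl e' (List.mem_cons_of_mem _ h')
    have h1 : (1 - ιG α e) * Qp α m = Qp α m * (1 - ιG α e) :=
      sub_comm_of_comm α (Qp_comm_ι α he hm)
    rw [Qp_cons, mul_assoc, ih hl', ← mul_assoc, h1, mul_assoc, ← mul_assoc]

lemma Qp_idem {l : List G} (hl : ∀ e ∈ l, e * e = e) : Qp α l * Qp α l = Qp α l := by
  induction l with
  | nil => rw [Qp_nil, one_mul]
  | cons e l ih =>
    have he := hl e List.mem_cons_self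
    have hl' : ∀ e ∈ l, e * e = e := fun e' h' => hl e' (List.mem_cons_of_mem _ h')
    have h1 : Qp α l * (1 - ιG α e) = (1 - ιG α e) * Qp α l :=
      (sub_comm_of_comm α (Qp_comm_ι α he hl')).symm
    have h2 : (1 - ιG α e) * (1 - ιG α e) = 1 - ιG α e := by
      apply one_sub_idem
      rw [ιG_mul, he]
    rw [Qp_cons, mul_assoc, ← mul_assoc (Qp α l), h1, mul_assoc, ih hl', ← mul_assoc, h2]

lemma Qp_star {l : List G} (hl : ∀ e ∈ l, e * e = e) : star (Qp α l) = Qp α l := by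
  induction l with
  | nil => rw [Qp_nil, star_one]
  | cons e l ih =>
    have he := hl e List.mem_cons_self
    have hl' : ∀ e ∈ l, e * e = e := fun e' h' => hl e' (List.mem_cons_of_mem _ h')
    have h1 : star (1 - ιG α e) = 1 - ιG α e := by
      rw [star_sub, star_one, ιG_star, idem_starG he]
    rw [Qp_cons, star_mul, ih hl', h1, sub_comm_of_comm α (Qp_comm_ι α he hl')]

lemma elemP_mul {e₀ f₀ : G} {l m : List G} (hf₀ : f₀ * f₀ = f₀) (hl : ∀ e ∈ l, e * e = e) :
    elemP α e₀ l * elemP α f₀ m = elemP α (e₀ * f₀) (l ++ m) := by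
  rw [elemP_eq, elemP_eq, elemP_eq, Qp_append, ← ιG_mul, mul_assoc (ιG α e₀),
    ← mul_assoc (Qp α l), ← Qp_comm_ι α hf₀ hl, mul_assoc (ιG α f₀), ← mul_assoc]

lemma elemP_idem {e₀ : G} {l : List G} (he₀ : e₀ * e₀ = e₀) (hl : ∀ e ∈ l, e * e = e) :
    elemP α e₀ l * elemP α e₀ l = elemP α e₀ l := by
  rw [elemP_mul α he₀ hl, he₀, elemP_eq, elemP_eq, Qp_append, Qp_idem α hl]

lemma elemP_star {e₀ : G} {l : List G} (he₀ : e₀ * e₀ = e₀) (hl : ∀ e ∈ l, e * e = e) :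
    star (elemP α e₀ l) = elemP α e₀ l := by
  rw [elemP_eq, star_mul, Qp_star α hl, ιG_star, idem_starG he₀, Qp_comm_ι α he₀ hl]

lemma elemP_comm {e₀ f₀ : G} {l m : List G} (he₀ : e₀ * e₀ = e₀) (hl : ∀ e ∈ l, e * e = e)
    (hf₀ : f₀ * f₀ = f₀) (hm : ∀ e ∈ m, e * e = e) :
    elemP α e₀ l * elemP α f₀ m = elemP α f₀ m * elemP α e₀ l := by
  rw [elemP_mul α hf₀ hl, elemP_mul α he₀ hm, idem_comm he₀ hf₀, elemP_eq, elemP_eq,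
    Qp_append, Qp_append, Qp_comm_Qp α hl hm]

lemma elemP_mul_ιG {e₀ : G} {l : List G} (g : G) (he₀ : e₀ * e₀ = e₀)
    (hl : ∀ e ∈ l, e * e = e) :
    elemP α e₀ l * ιG α g
      = ιG α g * elemP α (star g * e₀ * g) (l.map fun e => star g * e * g) := by
  have h1 : ∀ l' : List G, (∀ e ∈ l', e * e = e) →
      Qp α l' * ιG α g = ιG α g * Qp α (l'.map fun e => star g * e * g) := by
    intro l' hl'
    induction l' with
    | nil => rw [Qp_nil, one_mul, List.map_nil, Qp_nil, mul_one]
    | cons e l' ih =>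
      have he := hl' e List.mem_cons_self
      have hl'' : ∀ e ∈ l', e * e = e := fun e' h' => hl' e' (List.mem_cons_of_mem _ h')
      have h2 : (1 - ιG α e) * ιG α g = ιG α g * (1 - ιG α (star g * e * g)) := by
        rw [one_sub_mul, mul_one_sub, ιG_mul, ιG_mul, idem_mul_g g he]
      rw [List.map_cons, Qp_cons, Qp_cons, mul_assoc, ih hl'', ← mul_assoc, h2, mul_assoc]
  rw [elemP_eq, elemP_eq, mul_assoc, h1 l hl, ← mul_assoc, ιG_mul, idem_mul_g g he₀,
    ← ιG_mul, mul_assoc]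

section Sets
variable (S : Set G)

lemma EH_sub_EG {p : F α} (hp : p ∈ EH α S) : p ∈ EG α := by
  obtain ⟨e₀, l, ⟨_, he₀⟩, hl, rfl⟩ := hp
  exact ⟨e₀, l, he₀, fun e he => (hl e he).2, rfl⟩

lemma EG_idem {p : F α} (hp : p ∈ EG α) : p * p = p := by
  obtain ⟨e₀, l, he₀, hl, rfl⟩ := hp
  exact elemP_idem α he₀ hl

lemma EG_star {p : F α} (hp : p ∈ EG α) : star p = p := by
  obtain ⟨e₀, l, he₀, hl, rfl⟩ := hp
  exact elemP_star α he₀ hl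

lemma EG_comm {p q : F α} (hp : p ∈ EG α) (hq : q ∈ EG α) : p * q = q * p := by
  obtain ⟨e₀, l, he₀, hl, rfl⟩ := hp
  obtain ⟨f₀, m, hf₀, hm, rfl⟩ := hq
  exact elemP_comm α he₀ hl hf₀ hm

lemma EG_comm_ι {p : F α} (hp : p ∈ EG α) {f : G} (hf : f * f = f) :
    p * ιG α f = ιG α f * p := by
  rw [← elemP_nil α f]
  exact EG_comm α hp ⟨f, [], hf, by simp, rfl⟩

lemma EH_mul (hS : IsSubInvSemigroup S) {p q : F α} (hp : p ∈ EH α S) (hq : q ∈ EH α S) :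
    p * q ∈ EH α S := by
  obtain ⟨e₀, l, ⟨he₀S, he₀⟩, hl, rfl⟩ := hp
  obtain ⟨f₀, m, ⟨hf₀S, hf₀⟩, hm, rfl⟩ := hq
  refine ⟨e₀ * f₀, l ++ m, ⟨hS.mul_mem he₀S hf₀S, idem_mul_idem he₀ hf₀⟩, ?_,
    (elemP_mul α hf₀ (fun e he => (hl e he).2)).symm ▸ ?_⟩
  · intro e he
    rcases List.mem_append.mp he with h | h
    exacts [hl e h, hm e h]
  · rfl

lemma EH_conj (hS : IsSubInvSemigroup S) {p : F α} (hp : p ∈ EH α S) {t : G} (ht : t ∈ S) :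
    ∃ p' ∈ EH α S, p * ιG α t = ιG α t * p' ∧ p' = ιG α (star t) * (p * ιG α t) := by
  obtain ⟨e₀, l, ⟨he₀S, he₀⟩, hl, rfl⟩ := hp
  have hl2 : ∀ e ∈ l, e * e = e := fun e he => (hl e he).2
  refine ⟨elemP α (star t * e₀ * t) (l.map fun e => star t * e * t), ?_, ?_, ?_⟩
  · refine ⟨star t * e₀ * t, l.map fun e => star t * e * t,
      ⟨hS.mul_mem (hS.mul_mem (hS.star_mem ht) he₀S) ht, idem_conj' t he₀⟩, ?_, rfl⟩
    intro e he
    obtain ⟨e', he', rfl⟩ := List.mem_map.mp he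
    exact ⟨hS.mul_mem (hS.mul_mem (hS.star_mem ht) (hl e' he').1) ht,
      idem_conj' t (hl e' he').2⟩
  · exact elemP_mul_ιG α t he₀ hl2
  · rw [elemP_mul_ιG α t he₀ hl2, ← mul_assoc, ιG_mul, ← elemP_nil α (star t * t),
      elemP_mul α (idem_conj' t he₀) (by simp), lem_g11 t he₀, List.nil_append]

lemma min_absorb (hS : IsSubInvSemigroup S) {e w : F α} (he : e ∈ H0 α S) (hw : w ∈ EH α S) :
    w * e = 0 ∨ w * e = e := by
  obtain ⟨heEH, hne, hmin⟩ := he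
  by_cases h : w * e = 0
  · exact Or.inl h
  · refine Or.inr (hmin _ (EH_mul α S hS hw heEH) h ?_)
    rw [mul_assoc, EG_idem α (EH_sub_EG α S heEH)]

lemma H0_mul_eq (hS : IsSubInvSemigroup S) {p q : F α} (hp : p ∈ H0 α S) (hq : q ∈ H0 α S) :
    p * q = 0 ∨ p = q := by
  by_cases h : p * q = 0
  · exact Or.inl h
  · have hcomm : p * q = q * p := EG_comm α (EH_sub_EG α S hp.1) (EH_sub_EG α S hq.1)
    have h1 : p * q = q := (min_absorb α S hS hq hp.1).resolve_left h
    have h2 : q * p = p := (min_absorb α S hS hp hq.1).resolve_left (by rwa [← hcomm])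
    exact Or.inr (by rw [← h1, hcomm, h2])

lemma GH_le (hS : IsSubInvSemigroup S) {g : G} {p : F α} (hp : p ∈ H0 α S)
    (hx : ιG α g * p ∈ GH α S) : p * ιG α (star g * g) = p := by
  obtain ⟨hx0, g₁, e₁, he₁H0, hxeq, hle⟩ := hx
  have hpEG := EH_sub_EG α S hp.1
  have he₁EG := EH_sub_EG α S he₁H0.1
  have h1 : star (ιG α g * p) * (ιG α g * p) = p * ιG α (star g * g) := by
    rw [star_mul, EG_star α hpEG, ιG_star, mul_assoc, ← mul_assoc (ιG α (star g)), ιG_mul,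
      ← EG_comm_ι α hpEG (idem_ss g), ← mul_assoc, EG_idem α hpEG]
  have h2 : star (ιG α g₁ * e₁) * (ιG α g₁ * e₁) = e₁ := by
    rw [star_mul, EG_star α he₁EG, ιG_star, mul_assoc, ← mul_assoc (ιG α (star g₁)), ιG_mul,
      ← EG_comm_ι α he₁EG (idem_ss g₁), ← mul_assoc, EG_idem α he₁EG, hle]
  have key : p * ιG α (star g * g) = e₁ := by rw [← h1, hxeq, h2]
  have h3 : e₁ * p = e₁ := by
    rw [← key, mul_assoc, ← EG_comm_ι α hpEG (idem_ss g), ← mul_assoc, EG_idem α hpEG]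
  have h4 : e₁ = p := hp.2.2 e₁ he₁H0.1 he₁H0.2.1 h3
  rw [key, h4]

end Sets
end FAlg

section FAlg2
variable {G : Type*} [InverseSemigroup G]
variable {A : Type*} [NonUnitalNormedRing A] [StarRing A] [CStarRing A] [NormedSpace ℂ A]
  [IsScalarTower ℂ A A] [SMulCommClass ℂ A A] [StarModule ℂ A] [CompleteSpace A]
variable (α : G → A →⋆ₙₐ[ℂ] A)

lemma alpha_central_idem (hα : IsGAlgebra α) {e : G} (he : e * e = e) (u v : A) :
    α e u * v = u * α e v := by
  have h := hα.central e u v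
  rwa [idem_starG he, he] at h

lemma alpha_idem_sq (hα : IsGAlgebra α) {e : G} (he : e * e = e) (u : A) :
    α e (α e u) = α e u := by
  have h := hα.map_mul e e
  rw [he] at h
  exact (DFunLike.congr_fun h u).symm

lemma actL_mul (hα : IsGAlgebra α) {l : List G} (hl : ∀ e ∈ l, e * e = e) (u v : A) :
    actL α l (u * v) = actL α l u * actL α l v := by
  induction l with
  | nil => rfl
  | cons e l ih =>
    have he := hl e List.mem_cons_self
    have hl' : ∀ e ∈ l, e * e = e := fun e' h' => hl e' (List.mem_cons_of_mem _ h')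
    simp only [actL]
    rw [ih hl']
    set x := actL α l u
    set y := actL α l v
    have hc : α e x * y = x * α e y := alpha_central_idem α hα he x y
    have hcc : α e x * α e y = x * α e y := by
      rw [alpha_central_idem α hα he, alpha_idem_sq α hα he]
    have hxy : α e (x * y) = x * α e y := by
      rw [map_mul, hcc]
    rw [hxy, sub_mul, mul_sub, mul_sub, hc, hcc, sub_self, sub_zero]

lemma actP_mul (hα : IsGAlgebra α) {e₀ : G} {l : List G} (hl : ∀ e ∈ l, e * e = e) (u v : A) :
    actP α e₀ l (u * v) = actP α e₀ l u * actP α e₀ l v := by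
  simp only [actP]
  rw [actL_mul α hα hl, map_mul]

lemma actGE_mul (hα : IsGAlgebra α) {g e₀ : G} {l : List G} (hl : ∀ e ∈ l, e * e = e) (u v : A) :
    actGE α g e₀ l (u * v) = actGE α g e₀ l u * actGE α g e₀ l v := by
  simp only [actGE]
  rw [actP_mul α hα hl, map_mul]

lemma actStar_mul (hα : IsGAlgebra α) {g e₀ : G} {l : List G} (hl : ∀ e ∈ l, e * e = e)
    (u v : A) :
    actStar α g e₀ l (u * v) = actStar α g e₀ l u * actStar α g e₀ l v := by
  have hmap : ∀ e ∈ l.map (fun e => g * e * star g), e * e = e := by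
    intro e he
    obtain ⟨e', h', rfl⟩ := List.mem_map.mp he
    exact idem_conj g (hl e' h')
  simp only [actStar]
  rw [actP_mul α hα hmap, map_mul]

lemma ind_true {P : Prop} (h : P) : ind P = 1 := by unfold ind; exact if_pos h

lemma ind_false {P : Prop} (h : ¬P) : ind P = 0 := by unfold ind; exact if_neg h

lemma ind_mul_ind {P Q R : Prop} (h : P ↔ Q ∧ R) : ind P = ind Q * ind R := by
  by_cases hq : Q <;> by_cases hr : R
  · rw [ind_true (h.mpr ⟨hq, hr⟩), ind_true hq, ind_true hr, one_mul]
  · rw [ind_false (fun hp => hr (h.mp hp).2), ind_false hr, mul_zero]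
  · rw [ind_false (fun hp => hq (h.mp hp).1), ind_false hq, zero_mul]
  · rw [ind_false (fun hp => hq (h.mp hp).1), ind_false hq, zero_mul]

lemma key_equiv (S : Set G) (hS : IsSubInvSemigroup S)
    {gg ge₀ hg he₀ kg ke₀ : G} {gl lh lk : List G}
    (hgH0 : elemP α ge₀ gl ∈ H0 α S) (hgGH : elemGE α gg ge₀ gl ∈ GH α S)
    (hhH0 : elemP α he₀ lh ∈ H0 α S)
    (hX : elemGE α gg ge₀ gl * star (elemGE α hg he₀ lh) * elemGE α kg ke₀ lk ≠ 0) :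
    (star (elemGE α hg he₀ lh) * elemGE α kg ke₀ lk ∈ Hgpd α S) ↔
      ((elemGE α gg ge₀ gl * star (elemGE α hg he₀ lh) * elemGE α kg ke₀ lk ∈ GH α S) ∧
       equivH α S (elemGE α gg ge₀ gl)
         (elemGE α gg ge₀ gl * star (elemGE α hg he₀ lh) * elemGE α kg ke₀ lk)) := by
  unfold elemGE at hX ⊢
  have hgGH' : ιG α gg * elemP α ge₀ gl ∈ GH α S := hgGH
  set p := elemP α ge₀ gl with hp_def
  set q := elemP α he₀ lh with hq_def
  set r := elemP α ke₀ lk with hr_def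
  have hpEG := EH_sub_EG α S hgH0.1
  have hqEG := EH_sub_EG α S hhH0.1
  have hD : p * ιG α (star gg * gg) = p := GH_le α S hS hgH0 hgGH'
  have hstary : star (ιG α hg * q) = q * ιG α (star hg) := by
    rw [star_mul, ιG_star, EG_star α hqEG]
  have hwq : star (ιG α hg * q) * (ιG α kg * r) = q * (ιG α (star hg * kg) * r) := by
    rw [hstary, mul_assoc, ← mul_assoc (ιG α (star hg)), ιG_mul]
  constructor
  · intro hP
    obtain ⟨hw0, t, htS, e, heH0, hweq⟩ := hP
    have heEG := EH_sub_EG α S heH0.1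
    obtain ⟨p', hp'EH, hswap, hchar⟩ := EH_conj α S hS hgH0.1 htS
    have hp'EG := EH_sub_EG α S hp'EH
    have hXeq : ιG α gg * p * star (ιG α hg * q) * (ιG α kg * r)
        = ιG α (gg * t) * (p' * e) := by
      rw [mul_assoc, hweq, ← ιG_mul, mul_assoc (ιG α gg), ← mul_assoc p, hswap,
        mul_assoc (ιG α t), ← mul_assoc (ιG α gg)]
    have hpe : p' * e = e := by
      rcases min_absorb α S hS heH0 hp'EH with h0 | h1
      · exact absurd (by rw [hXeq, h0, mul_zero]) hX
      · exact h1
    have hep : e * p' = e := by rw [EG_comm α heEG hp'EG, hpe]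
    have hp'c : p' * ιG α (star t * ((star gg * gg) * t)) = p' := by
      rw [hchar, mul_assoc, mul_assoc, ιG_mul, lem_g8 gg t, ← ιG_mul, ← mul_assoc p, hD]
    have hec : e * ιG α (star (gg * t) * (gg * t)) = e := by
      rw [lem_g9 gg t, ← hep, mul_assoc, hp'c]
    refine ⟨⟨hX, gg * t, e, heH0, by rw [hXeq, hpe], hec⟩, ?_⟩
    exact ⟨star (ιG α hg * q) * (ιG α kg * r), ⟨hw0, t, htS, e, heH0, hweq⟩,
      (mul_assoc _ _ _).symm⟩
  · rintro ⟨_hQ, u, huH, hxu⟩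
    obtain ⟨hu0, s, hsS, e, heH0, hueq⟩ := huH
    have hxx : star (ιG α gg * p) * (ιG α gg * p) = p := by
      rw [star_mul, EG_star α hpEG, ιG_star, mul_assoc, ← mul_assoc (ιG α (star gg)), ιG_mul,
        ← EG_comm_ι α hpEG (idem_ss gg), ← mul_assoc, EG_idem α hpEG, hD]
    have hxu' : ιG α gg * p * u = ιG α gg * p * (star (ιG α hg * q) * (ιG α kg * r)) := by
      rw [hxu, mul_assoc]
    have h1 : p * u = p * (star (ιG α hg * q) * (ιG α kg * r)) := by
      have h1' : (star (ιG α gg * p) * (ιG α gg * p)) * u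
          = (star (ιG α gg * p) * (ιG α gg * p)) * (star (ιG α hg * q) * (ιG α kg * r)) := by
        rw [mul_assoc (star (ιG α gg * p)) (ιG α gg * p) u,
          mul_assoc (star (ιG α gg * p)) (ιG α gg * p)
            (star (ιG α hg * q) * (ιG α kg * r)), hxu']
      rwa [hxx] at h1'
    have hpu_ne : p * u ≠ 0 := by
      intro h0
      apply hX
      rw [← hxu, mul_assoc, h0, mul_zero]
    obtain ⟨p₂, hp₂EH, hswap₂, _⟩ := EH_conj α S hS hgH0.1 hsS
    have hpu : p * u = ιG α s * e := by
      rcases min_absorb α S hS heH0 hp₂EH with h0 | h2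
      · exact absurd (by rw [hueq, ← mul_assoc, hswap₂, mul_assoc, h0, mul_zero]) hpu_ne
      · rw [hueq, ← mul_assoc, hswap₂, mul_assoc, h2]
    have hpq : p = q := by
      rcases H0_mul_eq α S hS hgH0 hhH0 with h0 | h
      · exfalso
        apply hpu_ne
        rw [h1, hwq, ← mul_assoc, h0, zero_mul]
      · exact h
    have hww : star (ιG α hg * q) * (ιG α kg * r)
        = p * (star (ιG α hg * q) * (ιG α kg * r)) := by
      rw [hwq]
      conv_rhs => rw [← mul_assoc, hpq, EG_idem α hqEG]
    have hwfin : star (ιG α hg * q) * (ιG α kg * r) = ιG α s * e := by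
      rw [hww, ← h1, hpu]
    have hwne : star (ιG α hg * q) * (ιG α kg * r) ≠ 0 := by
      rw [hwfin, ← hpu]
      exact hpu_ne
    exact ⟨hwne, s, hsS, e, heH0, hwfin⟩

end FAlg2

end Green

namespace Green

/-- The identity `x·⟨y,z⟩_{B₀} = ⟨x,y⟩_{E₀}·z` on standard elements
`x = a⋊g`, `y = b⋊h`, `z = c⋊k`:  for all `g, h, k ∈ G_H` (given by representations)
and all `a ∈ A_{g g*}`, `b ∈ A_{h h*}`, `c ∈ A_{k k*}`,
`[h* k ∈ H] · a·α_g(α_{h*}(b*·c)) · (g h* k)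
  = [g h* k ∈ G_H]·[g ≡ g h* k] · a·α_{g h*}(b*)·α_{g h*}(c) · (g h* k)`
holds in `𝔽(G,A)`. -/
theorem inner_product_compatibility
    {G : Type*} [InverseSemigroup G]
    {A : Type*} [NonUnitalNormedRing A] [StarRing A] [CStarRing A] [NormedSpace ℂ A]
    [IsScalarTower ℂ A A] [SMulCommClass ℂ A A] [StarModule ℂ A] [CompleteSpace A]
    (α : G → A →⋆ₙₐ[ℂ] A) (hα : IsGAlgebra α)
    (S : Set G) (hS : IsSubInvSemigroup S) (hSfin : S.Finite)
    (gg ge₀ : G) (gl : List G) (hge : ge₀ * ge₀ = ge₀) (hgl : ∀ e ∈ gl, e * e = e)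
    (hgH0 : elemP α ge₀ gl ∈ H0 α S) (hgGH : elemGE α gg ge₀ gl ∈ GH α S)
    (hg he₀ : G) (lh : List G) (hhe : he₀ * he₀ = he₀) (hlh : ∀ e ∈ lh, e * e = e)
    (hhH0 : elemP α he₀ lh ∈ H0 α S) (hhGH : elemGE α hg he₀ lh ∈ GH α S)
    (kg ke₀ : G) (lk : List G) (hke : ke₀ * ke₀ = ke₀) (hlk : ∀ e ∈ lk, e * e = e)
    (hkH0 : elemP α ke₀ lk ∈ H0 α S) (hkGH : elemGE α kg ke₀ lk ∈ GH α S)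
    (a b c : A) (ha : a ∈ carrier α gg ge₀ gl) (hb : b ∈ carrier α hg he₀ lh)
    (hc : c ∈ carrier α kg ke₀ lk) :
    ind (star (elemGE α hg he₀ lh) * elemGE α kg ke₀ lk ∈ Hgpd α S) •
      (ιA α (a * actGE α gg ge₀ gl (actStar α hg he₀ lh (star b * c))) *
        (elemGE α gg ge₀ gl * star (elemGE α hg he₀ lh) * elemGE α kg ke₀ lk))
    = (ind (elemGE α gg ge₀ gl * star (elemGE α hg he₀ lh) * elemGE α kg ke₀ lk ∈ GH α S) *
       ind (equivH α S (elemGE α gg ge₀ gl)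
             (elemGE α gg ge₀ gl * star (elemGE α hg he₀ lh) * elemGE α kg ke₀ lk))) •
      (ιA α (a * actGE α gg ge₀ gl (actStar α hg he₀ lh (star b)) *
          actGE α gg ge₀ gl (actStar α hg he₀ lh c)) *
        (elemGE α gg ge₀ gl * star (elemGE α hg he₀ lh) * elemGE α kg ke₀ lk)) := by

  have hA : actGE α gg ge₀ gl (actStar α hg he₀ lh (star b * c))
      = actGE α gg ge₀ gl (actStar α hg he₀ lh (star b)) *
        actGE α gg ge₀ gl (actStar α hg he₀ lh c) := by
    rw [actStar_mul α hα hlh, actGE_mul α hα hgl]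
  rw [hA, ← mul_assoc a]
  by_cases hX : elemGE α gg ge₀ gl * star (elemGE α hg he₀ lh) * elemGE α kg ke₀ lk = 0
  · rw [hX, mul_zero, smul_zero, smul_zero]
  · rw [ind_mul_ind (key_equiv α S hS hgH0 hgGH hhH0 hX)]

end Green
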